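/- For every δ > 0 there exists c(δ) > 0 such that for every integer N ≥ 1 and every subset A ⊆ ℤ/Nℤ with |A| ≥ δN, the number of pairs (x, r) ∈ (ℤ/Nℤ)² with x, x+r, x+2r all in A (allowing r = 0) is at least c(δ) · N². -/

import Mathlib

open Finset SimpleGraph TripartiteFromTriangles Sum3

namespace RothCyclicAux

variable {G : Type*} [CommRing G] [DecidableEq G] [Fintype G]

/-- The corners-style set associated to `A`. -/
def cornerSet (A : Finset G) : Finset (G × G) :=
  univ.filter fun p ↦ p.2 - p.1 ∈ A

/-- Triangle indices for the tripartite graph. -/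
def tIdx (A : Finset G) : Finset (G × G × G) :=
  (cornerSet A).map (Function.Embedding.mk (fun p ↦ (p.1, p.2, p.1 + p.2))
    (by rintro ⟨x₁, x₂⟩ ⟨y₁, y₂⟩ h; simp only [Prod.mk.injEq] at h ⊢; exact ⟨h.1, h.2.1⟩))

variable {A : Finset G} {a b c : G}

lemma mk_mem_tIdx : (a, b, c) ∈ tIdx A ↔ b - a ∈ A ∧ c = a + b := by
  simp only [tIdx, mem_map, Function.Embedding.coeFn_mk, Prod.exists, Prod.mk.injEq, cornerSet,
    mem_filter, mem_univ, true_and]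
  constructor
  · rintro ⟨x, y, hxy, rfl, rfl, rfl⟩; exact ⟨hxy, rfl⟩
  · rintro ⟨h, rfl⟩; exact ⟨a, b, h, rfl⟩

instance : ExplicitDisjoint (tIdx A) where
  inj₀ := by
    simp only [mk_mem_tIdx, and_imp]
    intro a b c a' h1 h2 h3 h4
    subst h2; exact add_right_cancel h4
  inj₁ := by
    simp only [mk_mem_tIdx, and_imp]
    intro a b c b' h1 h2 h3 h4
    subst h2; exact add_left_cancel h4
  inj₂ := by
    simp only [mk_mem_tIdx, and_imp]
    intro a b c c' h1 h2 h3 h4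
    subst h2; exact h4.symm

lemma card_tIdx : #(tIdx A) = Fintype.card G * #A := by
  rw [tIdx, card_map]
  rw [← card_univ, ← card_product]
  exact (card_equiv ((Equiv.refl _).prodShear fun a ↦ Equiv.addLeft a)
    (by simp [cornerSet])).symm

/-- The key inclusion: triangles of the graph inject (up to a factor `|G|`) into 3APs of `A`. -/
lemma cliqueFinset_subset (A : Finset G) :
    (graph (tIdx A)).cliqueFinset 3 ⊆
      ((univ : Finset G) ×ˢ (univ.filter fun p : G × G ↦
          p.1 ∈ A ∧ p.1 + p.2 ∈ A ∧ p.1 + 2 * p.2 ∈ A)).image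
        (fun q : G × (G × G) ↦
          ({in₀ q.1, in₁ (q.2.1 + q.1 + q.2.2), in₂ (q.2.1 + 2 * q.1)} : Finset (G ⊕ G ⊕ G))) := by
  intro s hs
  rw [mem_cliqueFinset_iff, is3Clique_iff] at hs
  obtain ⟨x, y, z, hxy, hxz, hyz, rfl⟩ := hs
  obtain ⟨a, b, c, habc, hab, hac, hbc⟩ := graph_triple hxy hxz hyz
  obtain ⟨c', hc'⟩ := Graph.in₀₁_iff.1 hab
  obtain ⟨b', hb'⟩ := Graph.in₀₂_iff.1 hac
  obtain ⟨a', ha'⟩ := Graph.in₁₂_iff.1 hbc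
  rw [mk_mem_tIdx] at hc' hb' ha'
  refine mem_image.2 ⟨(a, (c - 2 * a, a + b - c)), ?_, ?_⟩
  · simp only [mem_product, mem_univ, mem_filter, true_and]
    refine ⟨?_, ?_, ?_⟩
    · have h : c - 2 * a = b' - a := by rw [hb'.2]; ring
      rw [h]; exact hb'.1
    · have h : c - 2 * a + (a + b - c) = b - a := by ring
      rw [h]; exact hc'.1
    · have h : c - 2 * a + 2 * (a + b - c) = b - a' := by rw [ha'.2]; ring
      rw [h]; exact ha'.1
  · show ({in₀ a, in₁ (c - 2 * a + a + (a + b - c)), in₂ (c - 2 * a + 2 * a)} :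
      Finset (G ⊕ G ⊕ G)) = _
    have h1 : c - 2 * a + a + (a + b - c) = b := by ring
    have h2 : c - 2 * a + 2 * a = c := by ring
    rw [h1, h2, habc]

end RothCyclicAux

open RothCyclicAux

/-- **Roth's theorem, cyclic group version.** For every `δ > 0` there is
`c(δ) > 0` so that any `A ⊆ ℤ/Nℤ` with `|A| ≥ δN` contains at least `c(δ)N²`
progressions `x, x+r, x+2r` (with `r = 0` allowed). -/
theorem roth_cyclic (δ : ℝ) (hδ : 0 < δ) :
    ∃ c : ℝ, 0 < c ∧ ∀ (N : ℕ) [NeZero N], ∀ A : Finset (ZMod N),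
      δ * N ≤ A.card →
      c * (N : ℝ) ^ 2 ≤
        ((Finset.univ.filter (fun p : ZMod N × ZMod N =>
          p.1 ∈ A ∧ p.1 + p.2 ∈ A ∧ p.1 + 2 * p.2 ∈ A)).card : ℝ) := by
  set δ' : ℝ := min δ 1 with hδ'def
  have hδ'0 : 0 < δ' := lt_min hδ one_pos
  have hδ'1 : δ' ≤ 1 := min_le_right _ _
  have htrb : 0 < triangleRemovalBound (δ' / 9) :=
    triangleRemovalBound_pos (by positivity)
  refine ⟨27 * triangleRemovalBound (δ' / 9), by positivity, ?_⟩
  intro N _ A hA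
  have hN : 0 < (N : ℝ) := by
    exact_mod_cast Nat.pos_of_ne_zero (NeZero.ne N)
  have hA' : δ' * N ≤ (#A : ℝ) := by
    refine le_trans ?_ hA
    exact mul_le_mul_of_nonneg_right (min_le_left _ _) hN.le
  -- the graph is far from triangle-free
  have hfar : (graph (tIdx A)).FarFromTriangleFree (δ' / 9) := by
    apply farFromTriangleFree
    rw [card_tIdx, ZMod.card]
    push_cast
    calc δ' / 9 * ((N + N + N) ^ 2 : ℝ) = N * (δ' * N) := by ring
      _ ≤ N * #A := by gcongr
  have h2 := hfar.le_card_cliqueFinset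
  have hcardsum : (Fintype.card (ZMod N ⊕ ZMod N ⊕ ZMod N) : ℝ) = 3 * N := by
    simp [Fintype.card_sum, ZMod.card]; ring
  -- upper bound on the number of triangles
  have h3 : (#((graph (tIdx A)).cliqueFinset 3) : ℝ) ≤
      N * (#(univ.filter fun p : ZMod N × ZMod N ↦
        p.1 ∈ A ∧ p.1 + p.2 ∈ A ∧ p.1 + 2 * p.2 ∈ A) : ℝ) := by
    have h := card_le_card (cliqueFinset_subset A)
    have h4 := (h.trans (card_image_le)).trans_eq (card_product _ _)
    rw [card_univ, ZMod.card] at h4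
    exact_mod_cast h4
  rw [hcardsum] at h2
  nlinarith [h2, h3, sq_nonneg (N : ℝ)]
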